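/- Let k be a field and C a local commutative k-algebra that is essentially of finite type over k and formally unramified over k (equivalently, the module of Kähler differentials Ω_{C/k} vanishes). Then C is a field and is a finite separable extension of k. -/

import Mathlib

universe u

/-- Let `k` be a field and `C` a local commutative `k`-algebra, essentially of finite type
and formally unramified over `k`.  Then `C` is a field and is a finite separable extension
of `k`. -/
theorem formallyUnramified_local_essFiniteType_is_finite_separable (k C : Type u) [Field k]
    [CommRing C] [IsLocalRing C] [Algebra k C] [Algebra.EssFiniteType k C]
    [Algebra.FormallyUnramified k C] :
    IsField C ∧ Module.Finite k C ∧ Algebra.IsSeparable k C := by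
  classical
  -- `C` is Noetherian
  have hNoeth : IsNoetherianRing C := by
    have h1 : IsNoetherianRing (Algebra.EssFiniteType.subalgebra k C) :=
      Algebra.FiniteType.isNoetherianRing k _
    exact IsLocalization.isNoetherianRing (Algebra.EssFiniteType.submonoid k C) C h1
  set m := IsLocalRing.maximalIdeal C with hm
  -- The residue field is formally unramified and essentially of finite type over `k`,
  -- hence separable over `k`, hence formally smooth over `k`.
  haveI h2 : Algebra.EssFiniteType k (C ⧸ m) := Algebra.EssFiniteType.comp k C (C ⧸ m)
  haveI h3 : Algebra.FormallyUnramified k (C ⧸ m) := inferInstance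
  have hsm : Algebra.FormallySmooth k (C ⧸ m) := by
    letI : Field (C ⧸ m) := Ideal.Quotient.field m
    haveI h2' : Algebra.EssFiniteType k (C ⧸ m) := h2
    haveI h3' : Algebra.FormallyUnramified k (C ⧸ m) := h3
    haveI : Algebra.IsSeparable k (C ⧸ m) := Algebra.FormallyUnramified.isSeparable k (C ⧸ m)
    haveI := Algebra.FormallyEtale.of_isSeparable k (C ⧸ m)
    exact inferInstance
  -- m ≤ m ^ 2 via lifting the residue field along C⧸m² → C⧸m
  have key : m ≤ m ^ 2 := by
    set B := C ⧸ m ^ 2 with hB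
    set I : Ideal B := m.cotangentIdeal with hI'
    have hI : I ^ 2 = ⊥ := m.cotangentIdeal_square
    let π : C →ₐ[k] B ⧸ I := (Ideal.Quotient.mkₐ k I).comp (Ideal.Quotient.mkₐ k (m ^ 2))
    have hπ : ∀ x ∈ m, π x = 0 := by
      intro x hx
      exact Ideal.Quotient.eq_zero_iff_mem.mpr ⟨x, hx, rfl⟩
    let g : (C ⧸ m) →ₐ[k] B ⧸ I := Ideal.Quotient.liftₐ m π hπ
    obtain ⟨s, hs⟩ := Algebra.FormallySmooth.comp_surjective k (C ⧸ m) I hI g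
    have hcomp : (Ideal.Quotient.mkₐ k I).comp (Ideal.Quotient.mkₐ k (m ^ 2)) =
        (Ideal.Quotient.mkₐ k I).comp (s.comp (Ideal.Quotient.mkₐ k m)) := by
      ext x
      have : ((Ideal.Quotient.mkₐ k I).comp s) (Ideal.Quotient.mkₐ k m x)
          = g (Ideal.Quotient.mkₐ k m x) := by rw [hs]
      exact this.symm
    have heq := Algebra.FormallyUnramified.comp_injective (R := k) (A := C) I hI hcomp
    intro x hx
    have : Ideal.Quotient.mkₐ k (m ^ 2) x = s (Ideal.Quotient.mkₐ k m x) :=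
      congrArg (fun f : C →ₐ[k] B => f x) heq
    rw [show (Ideal.Quotient.mkₐ k m x : C ⧸ m) = 0 from Ideal.Quotient.eq_zero_iff_mem.mpr hx,
      map_zero] at this
    exact Ideal.Quotient.eq_zero_iff_mem.mp this
  -- Nakayama: m = ⊥
  have hmbot : m = ⊥ := by
    have hfg : m.FG := (isNoetherian_def.mp hNoeth) m
    refine Submodule.eq_bot_of_le_smul_of_le_jacobson_bot m m hfg ?_ ?_
    · intro x hx
      have := key hx
      rw [pow_two] at this
      rwa [smul_eq_mul]
    · rw [IsLocalRing.jacobson_eq_maximalIdeal ⊥ bot_ne_top]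
  have hfield : IsField C := IsLocalRing.isField_iff_maximalIdeal_eq.mpr hmbot
  letI : Field C := hfield.toField
  refine ⟨hfield, ?_, ?_⟩
  · exact Algebra.FormallyUnramified.finite_of_free (R := k) (S := C)
  · exact Algebra.FormallyUnramified.isSeparable k C
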